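/- If f₁ : ℝⁿ → ℝ is convex differentiable with (1/β)-Lipschitz gradient, then for any 0 < γ < 2β the map x ↦ x − γ∇f₁(x) is nonexpansive: ‖(x − γ∇f₁(x)) − (y − γ∇f₁(y))‖ ≤ ‖x − y‖ for all x, y. -/

import Mathlib

open scoped RealInnerProductSpace

section Aux

variable {E : Type*} [NormedAddCommGroup E] [InnerProductSpace ℝ E] [CompleteSpace E]

lemma aux_fderiv_apply_eq_inner {f : E → ℝ} {z : E} (h : DifferentiableAt ℝ f z) (v : E) :
    fderiv ℝ f z v = ⟪gradient f z, v⟫ := by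
  have hg : HasFDerivAt f (InnerProductSpace.toDual ℝ E (gradient f z)) z :=
    hasGradientAt_iff_hasFDerivAt.1 h.hasGradientAt
  rw [hg.fderiv]
  simp [InnerProductSpace.toDual_apply_apply]

lemma aux_hasDerivAt_line {f : E → ℝ} (hdiff : Differentiable ℝ f) (x h : E) (t : ℝ) :
    HasDerivAt (fun s : ℝ => f (x + s • h)) ⟪gradient f (x + t • h), h⟫ t := by
  have hc : HasDerivAt (fun s : ℝ => x + s • h) h t := by
    simpa using ((hasDerivAt_id t).smul_const h).const_add x
  have := ((hdiff (x + t • h)).hasFDerivAt).comp_hasDerivAt t hc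
  rwa [aux_fderiv_apply_eq_inner (hdiff _)] at this

/-- Gradient inequality for convex differentiable functions. -/
lemma aux_grad_ineq {f : E → ℝ} (hconv : ConvexOn ℝ Set.univ f)
    (hdiff : Differentiable ℝ f) (x y : E) :
    f x + ⟪gradient f x, y - x⟫ ≤ f y := by
  set φ : ℝ → ℝ := fun t => f (x + t • (y - x)) with hφdef
  have hφconv : ConvexOn ℝ Set.univ φ := by
    have := hconv.comp_affineMap
      (AffineMap.const ℝ ℝ x + (LinearMap.toSpanSingleton ℝ E (y - x)).toAffineMap)
    simpa [φ, Set.preimage_univ, Function.comp_def, LinearMap.toSpanSingleton_apply] using this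
  have hφ0 : HasDerivAt φ ⟪gradient f x, y - x⟫ 0 := by
    simpa using aux_hasDerivAt_line hdiff x (y - x) 0
  have hs := hφconv.le_slope_of_hasDerivAt (Set.mem_univ 0) (Set.mem_univ 1) one_pos hφ0
  have : slope φ 0 1 = f y - f x := by
    simp [slope, φ]
  rw [this] at hs
  linarith

/-- Descent lemma. -/
lemma aux_descent {f : E → ℝ} (hdiff : Differentiable ℝ f) {β : ℝ} (hβ : 0 < β)
    (hlip : ∀ x y, ‖gradient f x - gradient f y‖ ≤ 1 / β * ‖x - y‖) (x h : E) :
    f (x + h) ≤ f x + ⟪gradient f x, h⟫ + 1 / (2 * β) * ‖h‖ ^ 2 := by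
  set φ : ℝ → ℝ := fun s => f (x + s • h) with hφdef
  set ψ : ℝ → ℝ := fun t => ⟪gradient f (x + t • h), h⟫ with hψdef
  have hgradcont : Continuous fun z : E => gradient f z := by
    have : LipschitzWith (Real.toNNReal (1 / β)) fun z : E => gradient f z := by
      apply LipschitzWith.of_dist_le_mul
      intro a b
      rw [dist_eq_norm, dist_eq_norm, Real.coe_toNNReal']
      exact (hlip a b).trans (mul_le_mul_of_nonneg_right
        (le_max_left _ _) (norm_nonneg _))
    exact this.continuous
  have hψcont : Continuous ψ := by
    apply Continuous.inner
    · exact hgradcont.comp (by continuity)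
    · exact continuous_const
  have hint : ∫ t in (0:ℝ)..1, ψ t = φ 1 - φ 0 := by
    apply intervalIntegral.integral_eq_sub_of_hasDerivAt
    · intro t _
      exact aux_hasDerivAt_line hdiff x h t
    · exact hψcont.intervalIntegrable 0 1
  have hbound : ∀ t ∈ Set.Icc (0:ℝ) 1, ψ t ≤ ψ 0 + t * (1 / β * ‖h‖ ^ 2) := by
    intro t ht
    have h1 : ψ t - ψ 0 = ⟪gradient f (x + t • h) - gradient f x, h⟫ := by
      simp [ψ, inner_sub_left]
    have h2 : ⟪gradient f (x + t • h) - gradient f x, h⟫ ≤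
        ‖gradient f (x + t • h) - gradient f x‖ * ‖h‖ :=
      real_inner_le_norm _ _
    have h3 : ‖gradient f (x + t • h) - gradient f x‖ ≤ 1 / β * ‖t • h‖ := by
      simpa using hlip (x + t • h) x
    have h4 : ‖t • h‖ = t * ‖h‖ := by
      rw [norm_smul, Real.norm_eq_abs, abs_of_nonneg ht.1]
    rw [h4] at h3
    have h5 := mul_le_mul_of_nonneg_right h3 (norm_nonneg h)
    nlinarith [h1, h2, h5]
  have hintle : ∫ t in (0:ℝ)..1, ψ t ≤ ∫ t in (0:ℝ)..1, (ψ 0 + t * (1 / β * ‖h‖ ^ 2)) := by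
    apply intervalIntegral.integral_mono_on zero_le_one
    · exact hψcont.intervalIntegrable 0 1
    · exact (by fun_prop : Continuous fun t : ℝ => ψ 0 + t * (1 / β * ‖h‖ ^ 2)).intervalIntegrable 0 1
    · exact hbound
  have hval : ∫ t in (0:ℝ)..1, (ψ 0 + t * (1 / β * ‖h‖ ^ 2)) =
      ψ 0 + 1 / 2 * (1 / β * ‖h‖ ^ 2) := by
    rw [intervalIntegral.integral_add (intervalIntegrable_const)
      ((intervalIntegral.intervalIntegrable_id).mul_const _)]
    simp [intervalIntegral.integral_mul_const]
  have hφ0 : φ 0 = f x := by simp [φ]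
  have hφ1 : φ 1 = f (x + h) := by simp [φ]
  have hψ0 : ψ 0 = ⟪gradient f x, h⟫ := by simp [ψ]
  have hβ' : (0:ℝ) < 2 * β := by linarith
  have : f (x + h) - f x ≤ ⟪gradient f x, h⟫ + 1 / 2 * (1 / β * ‖h‖ ^ 2) := by
    rw [← hφ0, ← hφ1, ← hint, ← hψ0]
    linarith [hintle, hval.le, hval.ge]
  have heq : (1:ℝ) / 2 * (1 / β * ‖h‖ ^ 2) = 1 / (2 * β) * ‖h‖ ^ 2 := by
    field_simp
  linarith [heq ▸ this]

/-- Cocoercivity (Baillon–Haddad). -/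
lemma aux_cocoercive {f : E → ℝ} (hconv : ConvexOn ℝ Set.univ f)
    (hdiff : Differentiable ℝ f) {β : ℝ} (hβ : 0 < β)
    (hlip : ∀ x y, ‖gradient f x - gradient f y‖ ≤ 1 / β * ‖x - y‖) (x y : E) :
    β * ‖gradient f x - gradient f y‖ ^ 2 ≤ ⟪gradient f x - gradient f y, x - y⟫ := by
  have key : ∀ a b : E, f b + ⟪gradient f b, a - b⟫ +
      β / 2 * ‖gradient f a - gradient f b‖ ^ 2 ≤ f a := by
    intro a b
    set d := gradient f a - gradient f b with hd
    have hdesc := aux_descent hdiff hβ hlip a (-(β • d))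
    have hgi := aux_grad_ineq hconv hdiff b (a + -(β • d))
    have e1 : ⟪gradient f a, -(β • d)⟫ = -β * ⟪gradient f a, d⟫ := by
      rw [inner_neg_right, real_inner_smul_right]; ring
    have e2 : ⟪gradient f b, a + -(β • d) - b⟫ =
        ⟪gradient f b, a - b⟫ - β * ⟪gradient f b, d⟫ := by
      rw [show a + -(β • d) - b = (a - b) - β • d by abel, inner_sub_right,
        real_inner_smul_right]
    have e3 : ‖-(β • d)‖ ^ 2 = β ^ 2 * ‖d‖ ^ 2 := by
      rw [norm_neg, norm_smul, Real.norm_eq_abs, abs_of_pos hβ, mul_pow]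
    have e4 : ⟪gradient f a, d⟫ - ⟪gradient f b, d⟫ = ‖d‖ ^ 2 := by
      rw [← inner_sub_left, ← hd, real_inner_self_eq_norm_sq]
    have e5 : 1 / (2 * β) * (β ^ 2 * ‖d‖ ^ 2) = β / 2 * ‖d‖ ^ 2 := by
      field_simp
    rw [e1, e3, e5] at hdesc
    rw [e2] at hgi
    nlinarith [hdesc, hgi]
  have h1 := key x y
  have h2 := key y x
  have e : ‖gradient f y - gradient f x‖ = ‖gradient f x - gradient f y‖ := norm_sub_rev _ _
  rw [e] at h2
  have e2 : ⟪gradient f x, y - x⟫ = -⟪gradient f x, x - y⟫ := by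
    rw [← inner_neg_right]; congr 1; abel
  have e3 : ⟪gradient f y, x - y⟫ = -⟪gradient f y, y - x⟫ := by
    rw [← inner_neg_right]; congr 1; abel
  have e4 : ⟪gradient f x - gradient f y, x - y⟫ =
      ⟪gradient f x, x - y⟫ - ⟪gradient f y, x - y⟫ := inner_sub_left _ _ _
  nlinarith [h1, h2]

end Aux

/-- if `f₁` is convex differentiable with `(1/β)`-Lipschitz gradient and
`0 < γ < 2β`, then `x ↦ x − γ∇f₁(x)` is nonexpansive. -/
theorem gradient_step_nonexpansive (n : ℕ) (f₁ : EuclideanSpace ℝ (Fin n) → ℝ)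
    (hconv : ConvexOn ℝ Set.univ f₁) (hdiff : Differentiable ℝ f₁)
    (β : ℝ) (hβ : 0 < β)
    (hlip : ∀ x y, ‖gradient f₁ x - gradient f₁ y‖ ≤ 1 / β * ‖x - y‖)
    (γ : ℝ) (hγ : 0 < γ) (hγ2 : γ < 2 * β) :
    ∀ x y, ‖(x - γ • gradient f₁ x) - (y - γ • gradient f₁ y)‖ ≤ ‖x - y‖ := by
  intro x y
  set d := gradient f₁ x - gradient f₁ y with hd
  have hco := aux_cocoercive hconv hdiff hβ hlip x y
  have hrw : (x - γ • gradient f₁ x) - (y - γ • gradient f₁ y) = (x - y) - γ • d := by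
    rw [hd, smul_sub]; abel
  rw [hrw]
  have hsq : ‖(x - y) - γ • d‖ ^ 2 ≤ ‖x - y‖ ^ 2 := by
    have expand : ‖(x - y) - γ • d‖ ^ 2 =
        ‖x - y‖ ^ 2 - 2 * γ * ⟪d, x - y⟫ + γ ^ 2 * ‖d‖ ^ 2 := by
      rw [norm_sub_sq_real, norm_smul, Real.norm_eq_abs, abs_of_pos hγ,
        real_inner_smul_right, mul_pow, real_inner_comm]
      ring
    rw [expand]
    rw [← hd] at hco
    nlinarith [mul_le_mul_of_nonneg_left hco (by linarith : (0:ℝ) ≤ 2 * γ),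
      mul_nonneg (mul_nonneg (by linarith : (0:ℝ) ≤ γ)
        (by linarith : (0:ℝ) ≤ 2 * β - γ)) (sq_nonneg ‖d‖)]
  exact (pow_le_pow_iff_left₀ (norm_nonneg _) (norm_nonneg _) two_ne_zero).1 hsq
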